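/- In the LabelBoost sample-size recursion, if |S_{i-1}| ≥ (4800/α_{i-1})·d·log(14/(α_{i-1}β_{i-1})) with α_i = α/(10·2^i), β_i = β/(4·2^i), d ≥ 1, and |S_i| = (1/100)·β_{i-1}·d·exp(α_{i-1}|S_{i-1}|/(200d)), then |S_i| ≥ (4800/α_i)·d·log(14/(α_i β_i)). -/
import Mathlib


/-- Inductive step of the LabelBoost sample-size recursion: with
`αᵢ = α/(10·2^i)` and `βᵢ = β/(4·2^i)`, if
`|S_{i-1}| ≥ (4800/α_{i-1})·d·log(14/(α_{i-1}β_{i-1}))` and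
`|S_i| = (1/100)·β_{i-1}·d·exp(α_{i-1}|S_{i-1}|/(200d))`, then
`|S_i| ≥ (4800/α_i)·d·log(14/(αᵢβᵢ))`. -/
theorem stmt13 (α β d S1 S2 : ℝ) (i : ℕ) (hi : 1 ≤ i)
    (hα : 0 < α) (hα1 : α ≤ 1) (hβ : 0 < β) (hβ1 : β ≤ 1) (hd : 1 ≤ d)
    (hS1 : (4800 / (α / (10 * 2 ^ (i - 1)))) * d *
        Real.log (14 / ((α / (10 * 2 ^ (i - 1))) * (β / (4 * 2 ^ (i - 1))))) ≤ S1)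
    (hS2 : S2 = (1 / 100) * (β / (4 * 2 ^ (i - 1))) * d *
        Real.exp ((α / (10 * 2 ^ (i - 1))) * S1 / (200 * d))) :
    (4800 / (α / (10 * 2 ^ i))) * d *
        Real.log (14 / ((α / (10 * 2 ^ i)) * (β / (4 * 2 ^ i)))) ≤ S2 := by
  obtain ⟨j, rfl⟩ : ∃ j, i = j + 1 := ⟨i - 1, (Nat.succ_pred_eq_of_pos hi).symm⟩
  simp only [Nat.add_sub_cancel] at hS1 hS2
  set a := α / (10 * 2 ^ j) with ha_def
  set b := β / (4 * 2 ^ j) with hb_def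
  have hd0 : (0:ℝ) < d := by linarith
  have ha0 : 0 < a := by rw [ha_def]; positivity
  have hb0 : 0 < b := by rw [hb_def]; positivity
  clear_value a b
  have h2j : (1:ℝ) ≤ 2 ^ j := by
    have : (2:ℝ)^0 ≤ 2^j := pow_le_pow_right₀ (by norm_num) (Nat.zero_le j)
    simpa using this
  have ha' : a ≤ 1/10 := by
    rw [ha_def, div_le_iff₀ (by positivity)]
    nlinarith
  have hb' : b ≤ 1/4 := by
    rw [hb_def, div_le_iff₀ (by positivity)]
    nlinarith
  set x := 14 / (a * b) with hx_def
  clear_value x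
  have hxpos : 0 < x := by rw [hx_def]; positivity
  have hx560 : 560 ≤ x := by
    rw [hx_def, le_div_iff₀ (by positivity)]
    nlinarith [mul_le_mul ha' hb' hb0.le (by norm_num : (0:ℝ) ≤ 1/10)]
  have hx1 : (1:ℝ) ≤ x := by linarith
  have hlogx : 0 ≤ Real.log x := Real.log_nonneg hx1
  -- rewrite goal in terms of a, b
  have hga : α / (10 * 2 ^ (j+1)) = a / 2 := by rw [ha_def, pow_succ]; ring
  have hgb : β / (4 * 2 ^ (j+1)) = b / 2 := by rw [hb_def, pow_succ]; ring
  rw [hga, hgb]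
  have hr1 : 4800 / (a/2) = 9600 / a := by
    field_simp; norm_num
  have hr2 : (14:ℝ) / (a/2 * (b/2)) = 4 * x := by
    rw [hx_def]; field_simp; ring
  rw [hr1, hr2, hS2]
  -- key exponent bound
  have h24 : 24 * Real.log x ≤ a * S1 / (200 * d) := by
    rw [le_div_iff₀ (by positivity)]
    have h := mul_le_mul_of_nonneg_left hS1 ha0.le
    have heq : a * (4800 / a * d * Real.log x) = 4800 * d * Real.log x := by
      field_simp
    rw [heq] at h
    nlinarith
  have hexp : x ^ (24:ℕ) ≤ Real.exp (a * S1 / (200 * d)) := by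
    have : Real.exp (24 * Real.log x) = x ^ (24:ℕ) := by
      rw [show (24:ℝ) * Real.log x = ((24:ℕ):ℝ) * Real.log x by norm_num,
        Real.exp_nat_mul, Real.exp_log hxpos]
    rw [← this]
    exact Real.exp_le_exp.mpr h24
  have habx : a * b * x = 14 := by
    rw [hx_def]; field_simp
  have hlog4x : Real.log (4 * x) ≤ 4 * x := by
    have := Real.log_le_sub_one_of_pos (show (0:ℝ) < 4 * x by positivity)
    linarith
  have hlog4x0 : 0 ≤ Real.log (4 * x) := Real.log_nonneg (by linarith)
  have hx23 : 313600 * x ≤ x ^ (23:ℕ) := by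
    have h3 : x ^ (3:ℕ) ≤ x ^ (23:ℕ) := pow_le_pow_right₀ hx1 (by norm_num)
    nlinarith [sq_nonneg x, mul_pos hxpos hxpos]
  -- main inequality
  have key : 9600 / a * d * Real.log (4 * x) ≤ 1/100 * b * d * x ^ (24:ℕ) := by
    rw [div_mul_eq_mul_div, div_mul_eq_mul_div, div_le_iff₀ ha0]
    have hrw : 1/100 * b * d * x ^ (24:ℕ) * a = 14/100 * d * x ^ (23:ℕ) := by
      have h1 : 1/100 * b * d * x ^ (24:ℕ) * a = 1/100 * d * x ^ (23:ℕ) * (a*b*x) := by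
        ring
      rw [h1, habx]; ring
    rw [hrw]
    have h2 : 9600 * d * Real.log (4*x) ≤ 9600 * d * (4*x) :=
      mul_le_mul_of_nonneg_left hlog4x (by positivity)
    have h3 : 14/100 * d * (313600 * x) ≤ 14/100 * d * x ^ (23:ℕ) :=
      mul_le_mul_of_nonneg_left hx23 (by positivity)
    have hdx : 0 ≤ d * x := mul_nonneg hd0.le hxpos.le
    calc 9600 * d * Real.log (4 * x) ≤ 9600 * d * (4 * x) := h2
      _ = 38400 * (d * x) := by ring
      _ ≤ 43904 * (d * x) := by linarith
      _ = 14/100 * d * (313600 * x) := by ring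
      _ ≤ 14/100 * d * x ^ (23:ℕ) := h3
  calc 9600 / a * d * Real.log (4 * x)
      ≤ 1/100 * b * d * x ^ (24:ℕ) := key
    _ ≤ 1/100 * b * d * Real.exp (a * S1 / (200 * d)) :=
        mul_le_mul_of_nonneg_left hexp (by positivity)
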